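/- Let A be an n×n real matrix and let u_1, …, u_{j+p} be orthonormal vectors in ℝⁿ such that for each 1 ≤ ℓ ≤ j there exist real scalars h_{i,ℓ} with A u_ℓ = Σ_{i=1}^{ℓ+p} h_{i,ℓ} u_i and h_{ℓ+p,ℓ} ≠ 0 (no breakdown in the banded Lanczos process). Write j = (k−1)p + m with k ≥ 1 and 0 ≤ m < p, and let F be the n×p matrix with columns u_1,…,u_p. Then span{u_1, …, u_{j+p}} = K_{k,m}(A, F). -/

import Mathlib

open Matrix

/-- The Krylov subspace `K_k(A,v) = span {v, Av, …, A^{k-1} v}`. -/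
def krylov {n : ℕ} (A : Matrix (Fin n) (Fin n) ℝ) (v : Fin n → ℝ) (k : ℕ) :
    Submodule ℝ (Fin n → ℝ) :=
  Submodule.span ℝ {x | ∃ i < k, x = (A ^ i).mulVec v}

/-- The banded Krylov subspace
`K_{k,m}(A,F) = Σ_{ℓ=1}^{m} K_{k+1}(A,f_ℓ) + Σ_{ℓ=m+1}^{p} K_k(A,f_ℓ)`
(columns of `F` are zero-indexed here). -/
def bandedKrylov {n p : ℕ} (A : Matrix (Fin n) (Fin n) ℝ) (F : Matrix (Fin n) (Fin p) ℝ)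
    (k m : ℕ) : Submodule ℝ (Fin n → ℝ) :=
  ⨆ l : Fin p, krylov A (fun r => F r l) (if (l : ℕ) < m then k + 1 else k)

/-- If `u_1, …, u_{j+p}` are orthonormal vectors satisfying the banded Lanczos recurrences
`A u_ℓ = Σ_{i=1}^{ℓ+p} h_{i,ℓ} u_i` with `h_{ℓ+p,ℓ} ≠ 0` for all `ℓ ≤ j` (no breakdown),
and `j = (k-1)p + m` with `k ≥ 1`, `0 ≤ m < p`, then the vectors `u_1, …, u_{j+p}` span the
banded Krylov subspace `K_{k,m}(A, F)` where `F` has columns `u_1, …, u_p`. -/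
theorem banded_lanczos_span {n j p k m : ℕ} (hk : 1 ≤ k) (hm : m < p)
    (hj : j = (k - 1) * p + m)
    (A : Matrix (Fin n) (Fin n) ℝ) (u : Fin (j + p) → Fin n → ℝ)
    (hortho : ∀ i l : Fin (j + p), u i ⬝ᵥ u l = if i = l then 1 else 0)
    (hrec : ∀ l : Fin j, ∃ h : Fin (j + p) → ℝ,
      A.mulVec (u (Fin.castAdd p l)) =
          ∑ i ∈ Finset.univ.filter (fun i : Fin (j + p) => (i : ℕ) ≤ (l : ℕ) + p),
            h i • u i ∧
        h ⟨(l : ℕ) + p, by omega⟩ ≠ 0) :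
    Submodule.span ℝ (Set.range u) =
      bandedKrylov A (Matrix.of fun r (l : Fin p) => u (Fin.castLE (by omega) l) r) k m := by
  classical
  have hpN : p ≤ j + p := Nat.le_add_left p j
  -- generating sets of "partial" banded Krylov spaces
  set G : ℕ → Set (Fin n → ℝ) := fun t =>
    {x | ∃ a : ℕ, ∃ q : Fin p, a * p + (q : ℕ) ≤ t ∧ x = (A ^ a).mulVec (u (Fin.castLE hpN q))}
    with hGdef
  have hGmono : ∀ s t : ℕ, s ≤ t → Submodule.span ℝ (G s) ≤ Submodule.span ℝ (G t) := by
    intro s t hst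
    apply Submodule.span_mono
    rintro x ⟨a, q, hle, rfl⟩
    exact ⟨a, q, le_trans hle hst, rfl⟩
  -- multiplying by A maps span (G s) into span (G (s+p))
  have hAmap : ∀ s : ℕ, ∀ x ∈ Submodule.span ℝ (G s),
      A.mulVec x ∈ Submodule.span ℝ (G (s + p)) := by
    intro s x hx
    have h1 : Submodule.span ℝ (G s) ≤
        (Submodule.span ℝ (G (s + p))).comap A.mulVecLin := by
      rw [Submodule.span_le]
      rintro y ⟨a, q, hle, rfl⟩
      apply Submodule.subset_span
      refine ⟨a + 1, q, ?_, ?_⟩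
      · calc (a + 1) * p + (q : ℕ) = (a * p + (q : ℕ)) + p := by ring
          _ ≤ s + p := Nat.add_le_add_right hle p
      · show A.mulVecLin ((A ^ a).mulVec (u (Fin.castLE hpN q))) = _
        rw [Matrix.mulVecLin_apply, Matrix.mulVec_mulVec, ← pow_succ']
    have := h1 hx
    simpa [Matrix.mulVecLin_apply] using this
  -- the key membership: u t ∈ span (G t)
  have key : ∀ t : ℕ, ∀ ht : t < j + p, u ⟨t, ht⟩ ∈ Submodule.span ℝ (G t) := by
    intro t
    induction t using Nat.strong_induction_on with
    | _ t ih =>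
      intro ht
      by_cases htp : t < p
      · apply Submodule.subset_span
        refine ⟨0, ⟨t, htp⟩, by simp, ?_⟩
        have : Fin.castLE hpN (⟨t, htp⟩ : Fin p) = ⟨t, ht⟩ := rfl
        rw [this, pow_zero, Matrix.one_mulVec]
      · push_neg at htp
        have hlt : t - p < j := by omega
        obtain ⟨h, hsum, hne⟩ := hrec ⟨t - p, hlt⟩
        have hsub : t - p + p = t := Nat.sub_add_cancel htp
        set T : Fin (j + p) := ⟨t, ht⟩ with hT
        have hTval : ((⟨(⟨t - p, hlt⟩ : Fin j) + p, by omega⟩ : Fin (j + p)) : Fin (j+p)) = T := by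
          apply Fin.ext
          simp [hT, hsub]
        rw [hTval] at hne
        have hTmem : T ∈ Finset.univ.filter
            (fun i : Fin (j + p) => (i : ℕ) ≤ ((⟨t - p, hlt⟩ : Fin j) : ℕ) + p) := by
          simp [hT, hsub]
        rw [← Finset.add_sum_erase _ _ hTmem] at hsum
        have hu : u T = (h T)⁻¹ • (A.mulVec (u (Fin.castAdd p ⟨t - p, hlt⟩)) -
            ∑ i ∈ (Finset.univ.filter
              (fun i : Fin (j + p) => (i : ℕ) ≤ ((⟨t - p, hlt⟩ : Fin j) : ℕ) + p)).erase T,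
              h i • u i) := by
          rw [hsum]
          rw [add_sub_cancel_right, smul_smul, inv_mul_cancel₀ hne, one_smul]
        rw [hu]
        apply Submodule.smul_mem
        apply Submodule.sub_mem
        · -- A.mulVec (u ⟨t-p⟩) ∈ span (G t)
          have h1 : u (Fin.castAdd p (⟨t - p, hlt⟩ : Fin j)) ∈ Submodule.span ℝ (G (t - p)) := by
            have := ih (t - p) (by omega) (by omega)
            convert this using 3
            rfl
          have h2 := hAmap (t - p) _ h1
          rwa [hsub] at h2
        · apply Submodule.sum_mem
          intro i hi
          simp only [Finset.mem_erase, Finset.mem_filter] at hi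
          have hilt : (i : ℕ) < t := by
            rcases hi with ⟨hne', -, hle'⟩
            have : (i : ℕ) ≤ t := by omega
            rcases lt_or_eq_of_le this with h' | h'
            · exact h'
            · exact absurd (Fin.ext h' : i = T) hne'
          apply Submodule.smul_mem
          have := ih (i : ℕ) hilt i.isLt
          rw [Fin.eta] at this
          exact hGmono _ _ (le_of_lt hilt) this
  have hjp : j + p = k * p + m := by
    have : (k - 1) * p + p = k * p := by
      cases k with
      | zero => omega
      | succ k' => simp only [Nat.succ_sub_one]; ring
    omega
  -- forward: every power A^i u_q stays in span of the u's
  have fwd : ∀ i : ℕ, ∀ q : Fin (j + p), (q : ℕ) + i * p < j + p →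
      (A ^ i).mulVec (u q) ∈ Submodule.span ℝ (Set.range u) := by
    intro i
    induction i with
    | zero =>
      intro q _
      rw [pow_zero, Matrix.one_mulVec]
      exact Submodule.subset_span ⟨q, rfl⟩
    | succ i ih =>
      intro q hq
      have hip : p ≤ (i + 1) * p := Nat.le_mul_of_pos_left p (Nat.succ_pos i)
      have hqj : (q : ℕ) < j := by omega
      obtain ⟨h, hsum, -⟩ := hrec ⟨(q : ℕ), hqj⟩
      have hcast : Fin.castAdd p (⟨(q : ℕ), hqj⟩ : Fin j) = q := Fin.ext rfl
      rw [hcast] at hsum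
      rw [pow_succ, ← Matrix.mulVec_mulVec, hsum]
      have : (A ^ i).mulVec (∑ x ∈ Finset.univ.filter
          (fun i : Fin (j + p) => (i : ℕ) ≤ ((⟨(q : ℕ), hqj⟩ : Fin j) : ℕ) + p), h x • u x) =
          ∑ x ∈ Finset.univ.filter
            (fun i : Fin (j + p) => (i : ℕ) ≤ ((⟨(q : ℕ), hqj⟩ : Fin j) : ℕ) + p),
            h x • (A ^ i).mulVec (u x) := by
        rw [show ∀ v, (A ^ i).mulVec v = (A ^ i).mulVecLin v from fun v => rfl]
        rw [map_sum]
        simp [Matrix.mulVecLin_apply]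
      rw [this]
      apply Submodule.sum_mem
      intro x hx
      simp only [Finset.mem_filter] at hx
      apply Submodule.smul_mem
      apply ih
      have hmul : (i + 1) * p = i * p + p := by ring
      omega
  apply le_antisymm
  · -- span range u ≤ bandedKrylov
    rw [Submodule.span_le]
    rintro x ⟨t, rfl⟩
    have hmem := key (t : ℕ) t.isLt
    rw [Fin.eta] at hmem
    -- span (G t) ≤ bandedKrylov
    refine Submodule.span_le.mpr ?_ hmem
    rintro x ⟨a, q, hle, rfl⟩
    have hbound : a * p + (q : ℕ) < k * p + m := by
      have := t.isLt
      omega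
    have hq : a < if (q : ℕ) < m then k + 1 else k := by
      split
      · by_contra hc
        push_neg at hc
        have : (k + 1) * p ≤ a * p := Nat.mul_le_mul_right p hc
        have h2 : (k + 1) * p = k * p + p := by ring
        omega
      · rename_i hqm
        push_neg at hqm
        by_contra hc
        push_neg at hc
        have : k * p ≤ a * p := Nat.mul_le_mul_right p hc
        omega
    have : (A ^ a).mulVec (u (Fin.castLE hpN q)) ∈
        krylov A (fun r => (Matrix.of fun r (l : Fin p) => u (Fin.castLE (by omega : p ≤ j + p) l) r) r q)
          (if (q : ℕ) < m then k + 1 else k) := by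
      apply Submodule.subset_span
      exact ⟨a, hq, rfl⟩
    exact le_iSup (fun l : Fin p => krylov A
      (fun r => (Matrix.of fun r (l : Fin p) => u (Fin.castLE (by omega : p ≤ j + p) l) r) r l)
      (if (l : ℕ) < m then k + 1 else k)) q this
  · -- bandedKrylov ≤ span range u
    apply iSup_le
    intro l
    rw [krylov, Submodule.span_le]
    rintro x ⟨i, hi, rfl⟩
    have hmem : ((Fin.castLE hpN l : Fin (j + p)) : ℕ) + i * p < j + p := by
      simp only [Fin.coe_castLE]
      have hlp := l.isLt
      split at hi
      · -- l < m, i < k + 1, so i ≤ k, i*p ≤ k*p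
        have : i * p ≤ k * p := Nat.mul_le_mul_right p (by omega)
        omega
      · rename_i hlm
        push_neg at hlm
        have : i * p ≤ (k - 1) * p := Nat.mul_le_mul_right p (by omega)
        omega
    have := fwd i (Fin.castLE hpN l) hmem
    convert this using 2
    exact Iff.rfl
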